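/- Let S = ⋃_{i=1}^n C_i be a finite union of nonempty closed convex sets in ℝ^N, and let P_S be an orthogonal projector onto S (i.e., for every x, P_S(x) ∈ S and ‖x − P_S(x)‖ = inf_{z∈S} ‖x − z‖). Then P_S satisfies the local obtuse-angle condition: for every x ∈ ℝ^N there exists ε > 0 such that ⟨z − P_S(x), x − P_S(x)⟩ ≤ 0 for all z ∈ S with ‖z − P_S(x)‖ ≤ ε. -/

import Mathlib

open scoped RealInnerProductSpace

lemma finset_exists_pos_le {ι : Type*} (s : Finset ι) (f : ι → ℝ)
    (hf : ∀ i ∈ s, 0 < f i) : ∃ ε > 0, ∀ i ∈ s, ε ≤ f i := by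
  classical
  induction s using Finset.induction with
  | empty => exact ⟨1, one_pos, by simp⟩
  | @insert a s ha ih =>
    obtain ⟨ε, hε, hle⟩ := ih (fun i hi => hf i (Finset.mem_insert_of_mem hi))
    refine ⟨min ε (f a), lt_min hε (hf a (Finset.mem_insert_self a s)), ?_⟩
    intro i hi
    rcases Finset.mem_insert.1 hi with rfl | hi
    · exact min_le_right _ _
    · exact le_trans (min_le_left _ _) (hle i hi)

/-- An orthogonal projector onto a finite union of nonempty closed convex sets
satisfies the local obtuse-angle condition. -/
theorem orthogonal_projector_union_convex_local_obtuse
    {N : ℕ} (n : ℕ) (C : Fin n → Set (EuclideanSpace ℝ (Fin N)))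
    (hne : ∀ i, (C i).Nonempty) (hcl : ∀ i, IsClosed (C i)) (hcv : ∀ i, Convex ℝ (C i))
    (S : Set (EuclideanSpace ℝ (Fin N))) (hS : S = ⋃ i, C i)
    (P : EuclideanSpace ℝ (Fin N) → EuclideanSpace ℝ (Fin N))
    (hPS : ∀ x, P x ∈ S)
    (hPproj : ∀ x, ∀ z ∈ S, ‖x - P x‖ ≤ ‖x - z‖) :
    ∀ x : EuclideanSpace ℝ (Fin N), ∃ ε > 0,
      ∀ z ∈ S, ‖z - P x‖ ≤ ε → (inner ℝ (z - P x) (x - P x) : ℝ) ≤ 0 := by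
  classical
  intro x
  set f : Fin n → ℝ := fun i => if P x ∈ C i then 1 else Metric.infDist (P x) (C i) with hf
  have hfpos : ∀ i ∈ (Finset.univ : Finset (Fin n)), 0 < f i := by
    intro i _
    by_cases h : P x ∈ C i
    · simp [hf, h]
    · simp only [hf, h, if_false]
      exact (IsClosed.notMem_iff_infDist_pos (hcl i) (hne i)).1 h
  obtain ⟨ε, hε, hle⟩ := finset_exists_pos_le Finset.univ f hfpos
  refine ⟨ε / 2, by positivity, ?_⟩
  intro z hz hznear
  have hzU : z ∈ ⋃ i, C i := hS ▸ hz
  obtain ⟨i, hzi⟩ := Set.mem_iUnion.1 hzU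
  -- P x must belong to C i
  have hPxi : P x ∈ C i := by
    by_contra h
    have h1 : Metric.infDist (P x) (C i) ≤ dist (P x) z :=
      Metric.infDist_le_dist_of_mem hzi
    have h2 : dist (P x) z = ‖z - P x‖ := by
      rw [dist_eq_norm, norm_sub_rev]
    have h3 : ε ≤ f i := hle i (Finset.mem_univ i)
    have h4 : f i = Metric.infDist (P x) (C i) := by simp [hf, h]
    have : ε ≤ ε / 2 := by
      calc ε ≤ Metric.infDist (P x) (C i) := h4 ▸ h3
        _ ≤ ‖z - P x‖ := h2 ▸ h1
        _ ≤ ε / 2 := hznear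
    linarith
  -- P x is the nearest point of C i to x
  have hCS : C i ⊆ S := by rw [hS]; exact Set.subset_iUnion C i
  have hinf : ‖x - P x‖ = ⨅ w : C i, ‖x - w‖ := by
    haveI : Nonempty (C i) := ⟨⟨P x, hPxi⟩⟩
    refine le_antisymm ?_ ?_
    · exact le_ciInf fun w => hPproj x w (hCS w.2)
    · exact ciInf_le ⟨0, fun r ⟨w, hw⟩ => hw ▸ norm_nonneg _⟩ (⟨P x, hPxi⟩ : C i)
  have := (norm_eq_iInf_iff_real_inner_le_zero (hcv i) hPxi).1 hinf z hzi
  rw [real_inner_comm]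
  exact this
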